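/- Let a and b be nonzero rational numbers. Then the set of primes ℓ such that the pair (a,b) is not isotropic over ℚ_ℓ is finite. -/

import Mathlib

/-- The pair `(a, b)` of nonzero rationals is *isotropic* over a field `F`
if `z² = a·x² + b·y²` has a nonzero solution in `F³`. -/
def RatIsotropic (F : Type*) [Field F] (a b : ℚ) : Prop :=
  ∃ x y z : F, (x, y, z) ≠ (0, 0, 0) ∧ z ^ 2 = (a : F) * x ^ 2 + (b : F) * y ^ 2

/-- `ℓ` is a *bad prime* for `(a, b)` if `ℓ` is prime and `(a, b)` is not
isotropic over `ℚ_ℓ`. -/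
def BadPrime (a b : ℚ) (ℓ : ℕ) : Prop :=
  ∃ h : ℓ.Prime, haveI : Fact ℓ.Prime := ⟨h⟩; ¬ RatIsotropic ℚ_[ℓ] a b

open Polynomial PadicInt

variable {p : ℕ} [Fact p.Prime]

lemma toZMod_eq_zero_iff (x : ℤ_[p]) : toZMod x = 0 ↔ ‖x‖ < 1 := by
  rw [← RingHom.mem_ker, ker_toZMod, maximalIdeal_eq_span_p, Ideal.mem_span_singleton,
    ← norm_lt_one_iff_dvd]

lemma norm_eq_one_of_toZMod_ne_zero {x : ℤ_[p]} (h : toZMod x ≠ 0) : ‖x‖ = 1 :=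
  le_antisymm x.norm_le_one (not_lt.1 fun hlt => h ((toZMod_eq_zero_iff x).2 hlt))

lemma toZMod_natCast_val (x : ZMod p) : toZMod ((x.val : ℤ_[p])) = x := by
  rw [map_natCast, ZMod.natCast_val, ZMod.cast_id]

lemma good_prime_isotropic (ℓ : ℕ) [Fact ℓ.Prime] (hℓ2 : ℓ ≠ 2) (a b : ℚ)
    (hA : ‖(a : ℚ_[ℓ])‖ = 1) (hB : ‖(b : ℚ_[ℓ])‖ = 1) :
    ∃ x y z : ℚ_[ℓ], (x, y, z) ≠ (0, 0, 0) ∧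
      z ^ 2 = (a : ℚ_[ℓ]) * x ^ 2 + (b : ℚ_[ℓ]) * y ^ 2 := by
  set A : ℤ_[ℓ] := ⟨(a : ℚ_[ℓ]), hA.le⟩ with hAdef
  set B : ℤ_[ℓ] := ⟨(b : ℚ_[ℓ]), hB.le⟩ with hBdef
  have hAcoe : ((A : ℤ_[ℓ]) : ℚ_[ℓ]) = (a : ℚ_[ℓ]) := rfl
  have hBcoe : ((B : ℤ_[ℓ]) : ℚ_[ℓ]) = (b : ℚ_[ℓ]) := rfl
  have hAnorm : ‖A‖ = 1 := hA
  have hBnorm : ‖B‖ = 1 := hB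
  have hAz : toZMod A ≠ 0 := by
    intro h
    have h2 := (toZMod_eq_zero_iff A).1 h
    rw [hAnorm] at h2; exact lt_irrefl _ h2
  have hBz : toZMod B ≠ 0 := by
    intro h
    have h2 := (toZMod_eq_zero_iff B).1 h
    rw [hBnorm] at h2; exact lt_irrefl _ h2
  -- finite field solution
  have hcard : Fintype.card (ZMod ℓ) % 2 = 1 := by
    rw [ZMod.card]; exact Nat.odd_iff.1 ((Fact.out : ℓ.Prime).odd_of_ne_two hℓ2)
  have hdegf : (C (toZMod A) * X ^ 2 + C (toZMod B) : Polynomial (ZMod ℓ)).degree = 2 := by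
    have h1 : (C (toZMod A) * X ^ 2 : Polynomial (ZMod ℓ)).degree = 2 := by
      exact_mod_cast Polynomial.degree_C_mul_X_pow 2 hAz
    have h2 : (C (toZMod B) : Polynomial (ZMod ℓ)).degree < (C (toZMod A) * X ^ 2).degree := by
      rw [h1]
      exact lt_of_le_of_lt Polynomial.degree_C_le (by norm_num)
    rw [Polynomial.degree_add_eq_left_of_degree_lt h2, h1]
  obtain ⟨x₀, z₀, hx₀z₀⟩ := FiniteField.exists_root_sum_quadratic
    (f := C (toZMod A) * X ^ 2 + C (toZMod B)) (g := -(X ^ 2))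
    hdegf (by rw [Polynomial.degree_neg]; exact_mod_cast Polynomial.degree_X_pow 2) hcard
  simp only [Polynomial.eval_add, Polynomial.eval_mul, Polynomial.eval_pow, Polynomial.eval_C,
    Polynomial.eval_X, Polynomial.eval_neg] at hx₀z₀
  have hmain : z₀ ^ 2 = toZMod A * x₀ ^ 2 + toZMod B := by linear_combination -hx₀z₀
  have two_ne : (2 : ZMod ℓ) ≠ 0 := by
    intro h
    have h2 : ((2 : ℕ) : ZMod ℓ) = 0 := by exact_mod_cast h
    have h3 := (ZMod.natCast_eq_zero_iff 2 ℓ).1 h2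
    exact hℓ2 ((Nat.prime_dvd_prime_iff_eq Fact.out Nat.prime_two).1 h3)
  have two_ne' : toZMod (2 : ℤ_[ℓ]) = (2 : ZMod ℓ) := by
    rw [map_ofNat]
  set X₀ : ℤ_[ℓ] := (x₀.val : ℤ_[ℓ]) with hX₀def
  set Z₀ : ℤ_[ℓ] := (z₀.val : ℤ_[ℓ]) with hZ₀def
  have hX₀ : toZMod X₀ = x₀ := toZMod_natCast_val x₀
  have hZ₀ : toZMod Z₀ = z₀ := toZMod_natCast_val z₀
  by_cases hz₀ : z₀ = 0
  · -- x₀ ≠ 0; solve A x² + B = 0 by Hensel in x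
    have hx₀ : x₀ ≠ 0 := by
      intro h; rw [h, hz₀] at hmain; simp at hmain; exact hBz hmain.symm
    set F : Polynomial ℤ_[ℓ] := C A * X ^ 2 + C B with hF
    have hFeval : ∀ t : ℤ_[ℓ], F.eval t = A * t ^ 2 + B := by
      intro t; simp [hF]
    have hFeval0 : toZMod (F.eval X₀) = 0 := by
      rw [hFeval, map_add, map_mul, map_pow, hX₀, ← hmain, hz₀]
      simp
    have hFder : F.derivative.eval X₀ = 2 * A * X₀ := by
      simp only [hF, derivative_add, derivative_C, derivative_C_mul, derivative_X_pow,
        add_zero]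
      simp
      try push_cast
      try ring
    have hderiv_norm : ‖F.derivative.eval X₀‖ = 1 := by
      rw [hFder]
      refine norm_eq_one_of_toZMod_ne_zero ?_
      rw [map_mul, map_mul, hX₀, two_ne']
      exact mul_ne_zero (mul_ne_zero two_ne hAz) hx₀
    obtain ⟨Z, hZroot, -⟩ := hensels_lemma (F := F) (a := X₀)
      (by rw [coe_aeval_eq_eval, hderiv_norm, one_pow]
          exact (toZMod_eq_zero_iff _).1 hFeval0)
    rw [coe_aeval_eq_eval, hFeval] at hZroot
    refine ⟨(Z : ℚ_[ℓ]), 1, 0, by simp, ?_⟩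
    have hq : (a : ℚ_[ℓ]) * (Z : ℚ_[ℓ]) ^ 2 + (b : ℚ_[ℓ]) = 0 := by
      have hc := congrArg (fun t : ℤ_[ℓ] => (t : ℚ_[ℓ])) hZroot
      simpa [PadicInt.coe_add, PadicInt.coe_mul, PadicInt.coe_pow, hAcoe, hBcoe] using hc
    linear_combination -hq
  · -- z₀ ≠ 0; solve z² = A X₀² + B by Hensel in z
    set F : Polynomial ℤ_[ℓ] := X ^ 2 - C (A * X₀ ^ 2 + B) with hF
    have hFeval : ∀ t : ℤ_[ℓ], F.eval t = t ^ 2 - (A * X₀ ^ 2 + B) := by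
      intro t; simp [hF]
    have hFeval0 : toZMod (F.eval Z₀) = 0 := by
      rw [hFeval, map_sub, map_pow, map_add, map_mul, map_pow, hX₀, hZ₀, ← hmain]
      ring
    have hFder : F.derivative.eval Z₀ = 2 * Z₀ := by
      simp only [hF, derivative_sub, derivative_C, derivative_X_pow, sub_zero]
      simp
      try push_cast
      try ring
    have hderiv_norm : ‖F.derivative.eval Z₀‖ = 1 := by
      rw [hFder]
      refine norm_eq_one_of_toZMod_ne_zero ?_
      rw [map_mul, hZ₀, two_ne']
      exact mul_ne_zero two_ne hz₀
    obtain ⟨Z, hZroot, -⟩ := hensels_lemma (F := F) (a := Z₀)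
      (by rw [coe_aeval_eq_eval, hderiv_norm, one_pow]
          exact (toZMod_eq_zero_iff _).1 hFeval0)
    rw [coe_aeval_eq_eval, hFeval] at hZroot
    have hz : Z ^ 2 = A * X₀ ^ 2 + B := sub_eq_zero.mp hZroot
    refine ⟨(X₀ : ℚ_[ℓ]), 1, (Z : ℚ_[ℓ]), by simp, ?_⟩
    have hq : (Z : ℚ_[ℓ]) ^ 2 = (a : ℚ_[ℓ]) * (X₀ : ℚ_[ℓ]) ^ 2 + (b : ℚ_[ℓ]) := by
      have hc := congrArg (fun t : ℤ_[ℓ] => (t : ℚ_[ℓ])) hz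
      simpa [PadicInt.coe_add, PadicInt.coe_mul, PadicInt.coe_pow, hAcoe, hBcoe] using hc
    linear_combination hq

lemma norm_ratCast_eq_one (ℓ : ℕ) [Fact ℓ.Prime] (a : ℚ)
    (h1 : ¬ (ℓ : ℤ) ∣ a.num) (h2 : ¬ ℓ ∣ a.den) : ‖(a : ℚ_[ℓ])‖ = 1 := by
  rw [Padic.eq_padicNorm]
  have h : padicNorm ℓ a = 1 := by
    conv_lhs => rw [← Rat.num_div_den a]
    rw [padicNorm.div, (padicNorm.int_eq_one_iff (p := ℓ) a.num).2 h1,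
      show ((a.den : ℚ)) = ((a.den : ℕ) : ℚ) by norm_cast,
      (padicNorm.nat_eq_one_iff (p := ℓ) a.den).2 h2]
    norm_num
  rw [h]
  norm_num

/-- For nonzero rationals `a, b`, the set of primes `ℓ` such that `(a,b)` is
not isotropic over `ℚ_ℓ` is finite. -/
theorem finitely_many_anisotropic_places (a b : ℚ) (ha : a ≠ 0) (hb : b ≠ 0) :
    {ℓ : ℕ | BadPrime a b ℓ}.Finite := by
  set N : ℕ := 2 * a.num.natAbs * a.den * b.num.natAbs * b.den with hN
  have hN0 : N ≠ 0 := by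
    have h1 : a.num.natAbs ≠ 0 := by simpa using Rat.num_ne_zero.2 ha
    have h2 : b.num.natAbs ≠ 0 := by simpa using Rat.num_ne_zero.2 hb
    simp [hN, h1, h2, a.den_nz, b.den_nz]
  refine Set.Finite.subset (N.divisors).finite_toSet ?_
  intro ℓ hℓ
  obtain ⟨hp, hbad⟩ := hℓ
  haveI : Fact ℓ.Prime := ⟨hp⟩
  rw [Finset.mem_coe, Nat.mem_divisors]
  refine ⟨?_, hN0⟩
  by_contra hdvd
  apply hbad
  refine good_prime_isotropic ℓ ?_ a b ?_ ?_
  · intro h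
    exact hdvd (h ▸ ⟨a.num.natAbs * a.den * b.num.natAbs * b.den, by rw [hN]; ring⟩)
  · refine norm_ratCast_eq_one ℓ a ?_ ?_
    · intro h
      exact hdvd (dvd_trans (Int.natAbs_dvd_natAbs.2 h)
        ⟨2 * a.den * b.num.natAbs * b.den, by rw [hN]; ring⟩)
    · intro h
      exact hdvd (dvd_trans h ⟨2 * a.num.natAbs * b.num.natAbs * b.den, by rw [hN]; ring⟩)
  · refine norm_ratCast_eq_one ℓ b ?_ ?_
    · intro h
      exact hdvd (dvd_trans (Int.natAbs_dvd_natAbs.2 h)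
        ⟨2 * a.num.natAbs * a.den * b.den, by rw [hN]; ring⟩)
    · intro h
      exact hdvd (dvd_trans h ⟨2 * a.num.natAbs * a.den * b.num.natAbs, by rw [hN]; ring⟩)
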